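/- If a = n^2 or a = n^2 − 1 for a positive integer n, then the sequence τ_s(a) is non-decreasing in s: for all s ≥ 1, τ_{s+1}(a) ≥ τ_s(a). In particular, if s√a < t < s√(a+1) for a positive integer t, then (s+1)√a < t+n < (s+1)√(a+1). -/
import Mathlib


noncomputable def tauN (s a : ℕ) : ℕ := {t : ℕ | 0 < t ∧ s^2 * a < t^2 ∧ t^2 < s^2 * (a+1)}.ncard

lemma nat_key (a n : ℕ) (hn : 0 < n) (h : a = n^2 ∨ a + 1 = n^2)
    (s t : ℕ) (ht0 : 0 < t) (h1 : s^2 * a < t^2) (h2 : t^2 < s^2 * (a+1)) :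
    0 < t + n ∧ (s+1)^2 * a < (t+n)^2 ∧ (t+n)^2 < (s+1)^2 * (a+1) := by
  refine ⟨by omega, ?_, ?_⟩
  · rcases h with h | h
    · subst h
      have hsn : s * n < t := by
        have : (s*n)^2 < t^2 := by ring_nf; ring_nf at h1; nlinarith
        exact lt_of_pow_lt_pow_left₀ 2 (Nat.zero_le _) this
      nlinarith
    · -- a + 1 = n^2, a < n^2
      have hal : a < n^2 := by omega
      have hsa : s * a < t * n := by
        have : (s*a)^2 < (t*n)^2 := by nlinarith
        exact lt_of_pow_lt_pow_left₀ 2 (Nat.zero_le _) this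
      nlinarith
  · rcases h with h | h
    · subst h
      have htn : t * n < s * (n^2+1) := by
        have : (t*n)^2 < (s*(n^2+1))^2 := by nlinarith
        exact lt_of_pow_lt_pow_left₀ 2 (Nat.zero_le _) this
      nlinarith
    · have hts : t < s * n := by
        have : t^2 < (s*n)^2 := by nlinarith
        exact lt_of_pow_lt_pow_left₀ 2 (Nat.zero_le _) this
      nlinarith

theorem stmt_19 (a n : ℕ) (hn : 0 < n) (ha : 1 ≤ a)
    (h : a = n^2 ∨ a + 1 = n^2) :
    (∀ s : ℕ, 1 ≤ s → tauN s a ≤ tauN (s+1) a) ∧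
    (∀ s t : ℕ, 0 < t →
      (s : ℝ) * Real.sqrt a < t → (t : ℝ) < s * Real.sqrt (a+1) →
      ((s : ℝ) + 1) * Real.sqrt a < t + n ∧
        ((t : ℝ) + n) < ((s : ℝ) + 1) * Real.sqrt (a+1)) := by
  constructor
  · intro s hs
    unfold tauN
    have hfin : {t : ℕ | 0 < t ∧ (s+1)^2 * a < t^2 ∧ t^2 < (s+1)^2 * (a+1)}.Finite := by
      apply Set.Finite.subset (Set.finite_Iio ((s+1)^2 * (a+1)))
      rintro t ⟨_, _, h2⟩
      exact lt_of_le_of_lt (Nat.le_self_pow two_ne_zero t) h2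
    calc {t : ℕ | 0 < t ∧ s^2 * a < t^2 ∧ t^2 < s^2 * (a+1)}.ncard
        = ((· + n) '' {t : ℕ | 0 < t ∧ s^2 * a < t^2 ∧ t^2 < s^2 * (a+1)}).ncard :=
          (Set.ncard_image_of_injective _ (fun x y hxy => by omega)).symm
      _ ≤ _ := by
          apply Set.ncard_le_ncard ?_ hfin
          rintro _ ⟨t, ⟨ht0, h1, h2⟩, rfl⟩
          exact nat_key a n hn h s t ht0 h1 h2
  · intro s t ht0 h1 h2
    have hs0 : (0:ℝ) ≤ Real.sqrt a := Real.sqrt_nonneg _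
    have hs1 : (0:ℝ) ≤ Real.sqrt (a+1) := Real.sqrt_nonneg _
    rcases h with hc | hc
    · have hA : Real.sqrt a = n := by
        rw [hc]; push_cast; exact Real.sqrt_sq (by positivity)
      have hB : (n:ℝ) < Real.sqrt (a+1) := by
        rw [show ((a:ℝ)+1) = ((a:ℕ)+1 : ℕ) by push_cast; ring]
        rw [Real.lt_sqrt (by positivity)]
        have : (n:ℝ)^2 = (a:ℝ) := by rw [hc]; push_cast; ring
        push_cast
        rw [this]; linarith
      rw [hA] at h1 ⊢
      constructor
      · nlinarith
      · nlinarith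
    · have hB : Real.sqrt (a+1) = n := by
        rw [show ((a:ℝ)+1) = (n:ℝ)^2 by exact_mod_cast hc]
        exact Real.sqrt_sq (by positivity)
      have hA : Real.sqrt a < n := by
        rw [Real.sqrt_lt' (by exact_mod_cast hn)]
        rw [show ((n:ℝ))^2 = ((a:ℝ)+1) by exact_mod_cast hc.symm]
        linarith
      rw [hB] at h2 ⊢
      constructor
      · nlinarith
      · nlinarith
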